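/- The marketplace step relation preserves state consistency: if a marketplace state ⟨C, D, B, t, G, i, L, E⟩ is consistent (all contract identifiers occurring in C are pairwise distinct and strictly smaller than the fresh id i) and it steps to a state ⟨C', D', B', t', G', i', L', E'⟩ by any of the rules Issue, Join, Join-Or, Fail, or Tick, then the resulting state is also consistent. -/

import Mathlib

/-- Currencies. -/
inductive Currency
  | USD | EUR
deriving DecidableEq, Repr

/-- Addresses of external data providers. -/
abbrev Address := ℕ

/-- Parties (participants). -/
abbrev Party := ℕ

/-- Findel primitives. -/
inductive Primitive
  | Zero : Primitive
  | One : Currency → Primitive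
  | Scale : ℕ → Primitive → Primitive
  | ScaleObs : Address → Primitive → Primitive
  | Give : Primitive → Primitive
  | And : Primitive → Primitive → Primitive
  | Or : Primitive → Primitive → Primitive
  | If : Address → Primitive → Primitive → Primitive
  | Timebound : ℕ → ℕ → Primitive → Primitive
deriving DecidableEq, Repr

/-- A ledger transaction: sender, receiver, amount, currency. -/
structure Transaction where
  sender : Party
  receiver : Party
  amount : ℕ
  currency : Currency
deriving DecidableEq, Repr

/-- Balances of the parties, per currency. -/
abbrev Balance := Party → Currency → ℤ

/-- An external gateway: a partial map from addresses to values. -/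
abbrev Gateway := Address → Option ℕ

/-- A Findel contract: id, description id, primitive, issuer, owner,
proposed owner, scale factor. -/
structure FindelContract where
  id : ℕ
  dscId : ℕ
  prim : Primitive
  issuer : Party
  owner : Party
  proposedOwner : Party
  scale : ℕ
deriving DecidableEq, Repr

/-- A Findel description: id, primitive and the time window in which
joining/execution is allowed. -/
structure Description where
  id : ℕ
  prim : Primitive
  startT : ℕ
  endT : ℕ
deriving DecidableEq, Repr

/-- Update balances: transfer `s` units of `cur` from `I` to `O`. -/
def updBal (B : Balance) (I O : Party) (s : ℕ) (cur : Currency) : Balance :=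
  fun p c =>
    if c = cur then
      B p c + (if p = O then (s : ℤ) else 0) - (if p = I then (s : ℤ) else 0)
    else B p c

/-- The execution function for Findel primitives.  Arguments: the primitive,
the contract id, the description id, the scale factor, the issuer, the owner,
the current time, the gateway, the current balances, the ledger and a fresh id.
It either fails (`none`) or returns the updated balances, the list of newly
generated contracts, a new fresh id and the updated ledger. -/
def exec : Primitive → ℕ → ℕ → ℕ → Party → Party → ℕ → Gateway → Balance →
    List Transaction → ℕ →
    Option (Balance × List FindelContract × ℕ × List Transaction)
  | .Zero, _, _, _, _, _, _, _, B, L, i => some (B, [], i, L)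
  | .One cur, _, _, s, I, O, _, _, B, L, i =>
      some (updBal B I O s cur, [], i, L ++ [⟨I, O, s, cur⟩])
  | .Scale k c, cid, did, s, I, O, t, G, B, L, i =>
      exec c cid did (k * s) I O t G B L i
  | .ScaleObs a c, cid, did, s, I, O, t, G, B, L, i =>
      match G a with
      | none => none
      | some k => exec c cid did (k * s) I O t G B L i
  | .Give c, cid, did, s, I, O, t, G, B, L, i =>
      exec c cid did s O I t G B L i
  | .And c₁ c₂, cid, did, s, I, O, t, G, B, L, i =>
      match exec c₁ cid did s I O t G B L i with
      | none => none
      | some (B', Cs₁, i', L') =>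
        match exec c₂ cid did s I O t G B' L' i' with
        | none => none
        | some (B'', Cs₂, i'', L'') => some (B'', Cs₁ ++ Cs₂, i'', L'')
  | .Or c₁ c₂, _, did, s, I, O, _, _, B, L, i =>
      some (B, [⟨i, did, .Or c₁ c₂, I, O, O, s⟩], i + 1, L)
  | .If a c₁ c₂, cid, did, s, I, O, t, G, B, L, i =>
      match G a with
      | none => none
      | some v =>
        if v ≠ 0 then exec c₁ cid did s I O t G B L i
        else exec c₂ cid did s I O t G B L i
  | .Timebound t₀ t₁ c, cid, did, s, I, O, t, G, B, L, i =>
      if t₀ ≤ t ∧ t ≤ t₁ then exec c cid did s I O t G B L i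
      else if t < t₀ then
        some (B, [⟨i, did, .Timebound t₀ t₁ c, I, O, O, s⟩], i + 1, L)
      else none

/-- Events triggered during the execution. -/
inductive Event
  | IssuedFor : Party → ℕ → Event
  | Executed : ℕ → Event
  | Deleted : ℕ → Event
deriving DecidableEq, Repr

/-- The marketplace state ⟨C, D, B, t, G, i, L, E⟩. -/
structure State where
  contracts : List FindelContract
  descriptions : List Description
  balance : Balance
  time : ℕ
  gateway : Gateway
  freshId : ℕ
  ledger : List Transaction
  events : List Event

/-- Labels for the rules of the marketplace step relation. -/
inductive Rule
  | issue | join | joinOr | fail | tick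
deriving DecidableEq, Repr

/-- The marketplace step relation, labeled by the applied rule. -/
inductive Step : Rule → State → State → Prop
  | issue (S : State) (dsc : Description) (I pO : Party) (s : ℕ)
      (hdsc : dsc ∈ S.descriptions) :
      Step .issue S
        { S with
          contracts := ⟨S.freshId, dsc.id, dsc.prim, I, I, pO, s⟩ :: S.contracts,
          freshId := S.freshId + 1,
          events := .IssuedFor pO S.freshId :: S.events }
  | join (S : State) (c : FindelContract) (dsc : Description)
      (B' : Balance) (Cs : List FindelContract) (i' : ℕ) (L' : List Transaction)
      (hc : c ∈ S.contracts)
      (hunjoined : c.owner = c.issuer)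
      (hdsc : dsc ∈ S.descriptions) (hdid : dsc.id = c.dscId)
      (hnotOr : ∀ c₁ c₂, c.prim ≠ .Or c₁ c₂)
      (htime : dsc.startT ≤ S.time ∧ S.time ≤ dsc.endT)
      (hexec : exec c.prim c.id c.dscId c.scale c.issuer c.proposedOwner
        S.time S.gateway S.balance S.ledger S.freshId = some (B', Cs, i', L')) :
      Step .join S
        { S with
          contracts := Cs ++ S.contracts.erase c,
          balance := B', freshId := i', ledger := L',
          events := .Executed c.id :: S.events }
  | joinOr (S : State) (c : FindelContract) (dsc : Description)
      (c₁ c₂ d : Primitive)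
      (B' : Balance) (Cs : List FindelContract) (i' : ℕ) (L' : List Transaction)
      (hc : c ∈ S.contracts)
      (hunjoined : c.owner = c.issuer)
      (hdsc : dsc ∈ S.descriptions) (hdid : dsc.id = c.dscId)
      (hOr : c.prim = .Or c₁ c₂)
      (hchoice : d = c₁ ∨ d = c₂)
      (htime : dsc.startT ≤ S.time ∧ S.time ≤ dsc.endT)
      (hexec : exec d c.id c.dscId c.scale c.issuer c.proposedOwner
        S.time S.gateway S.balance S.ledger S.freshId = some (B', Cs, i', L')) :
      Step .joinOr S
        { S with
          contracts := Cs ++ S.contracts.erase c,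
          balance := B', freshId := i', ledger := L',
          events := .Executed c.id :: S.events }
  | fail (S : State) (c : FindelContract) (dsc : Description)
      (hc : c ∈ S.contracts)
      (hunjoined : c.owner = c.issuer)
      (hdsc : dsc ∈ S.descriptions) (hdid : dsc.id = c.dscId)
      (hnotOr : ∀ c₁ c₂, c.prim ≠ .Or c₁ c₂)
      (htime : dsc.startT ≤ S.time ∧ S.time ≤ dsc.endT)
      (hexec : exec c.prim c.id c.dscId c.scale c.issuer c.proposedOwner
        S.time S.gateway S.balance S.ledger S.freshId = none) :
      Step .fail S
        { S with
          contracts := S.contracts.erase c,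
          events := .Deleted c.id :: S.events }
  | tick (S : State) :
      Step .tick S { S with time := S.time + 1 }

/-- A marketplace state is consistent when all contract identifiers are
pairwise distinct and strictly smaller than the fresh id. -/
def consistent (S : State) : Prop :=
  S.contracts.Pairwise (fun c c' => c.id ≠ c'.id) ∧
  ∀ c ∈ S.contracts, c.id < S.freshId

lemma exec_fresh :
    ∀ (p : Primitive) (cid did s : ℕ) (I O : Party) (t : ℕ) (G : Gateway)
      (B : Balance) (L : List Transaction) (i : ℕ)
      (B' : Balance) (Cs : List FindelContract) (i' : ℕ) (L' : List Transaction),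
      exec p cid did s I O t G B L i = some (B', Cs, i', L') →
      i ≤ i' ∧ (∀ c ∈ Cs, i ≤ c.id ∧ c.id < i') ∧
        Cs.Pairwise (fun c c' => c.id ≠ c'.id) := by
  intro p
  induction p with
  | Zero =>
    intro cid did s I O t G B L i B' Cs i' L' h
    simp only [exec, Option.some.injEq, Prod.mk.injEq] at h
    obtain ⟨_, h1, h2, _⟩ := h
    subst h1; subst h2; simp
  | One cur =>
    intro cid did s I O t G B L i B' Cs i' L' h
    simp only [exec, Option.some.injEq, Prod.mk.injEq] at h
    obtain ⟨_, h1, h2, _⟩ := h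
    subst h1; subst h2; simp
  | Scale k c ih =>
    intro cid did s I O t G B L i B' Cs i' L' h
    exact ih cid did (k*s) I O t G B L i B' Cs i' L' h
  | ScaleObs a c ih =>
    intro cid did s I O t G B L i B' Cs i' L' h
    simp only [exec] at h
    cases hG : G a with
    | none => rw [hG] at h; exact absurd h (by simp)
    | some k => rw [hG] at h; exact ih cid did (k*s) I O t G B L i B' Cs i' L' h
  | Give c ih =>
    intro cid did s I O t G B L i B' Cs i' L' h
    exact ih cid did s O I t G B L i B' Cs i' L' h
  | And c₁ c₂ ih₁ ih₂ =>
    intro cid did s I O t G B L i B' Cs i' L' h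
    cases h1 : exec c₁ cid did s I O t G B L i with
    | none => simp only [exec, h1] at h; exact absurd h (by simp)
    | some r1 =>
      obtain ⟨B1, Cs1, i1, L1⟩ := r1
      cases h2 : exec c₂ cid did s I O t G B1 L1 i1 with
      | none => simp only [exec, h1, h2] at h; exact absurd h (by simp)
      | some r2 =>
        obtain ⟨B2, Cs2, i2, L2⟩ := r2
        simp only [exec, h1, h2, Option.some.injEq, Prod.mk.injEq] at h
        obtain ⟨_, hCs, hi, _⟩ := h
        subst hCs; subst hi
        obtain ⟨le1, mem1, pw1⟩ := ih₁ cid did s I O t G B L i B1 Cs1 i1 L1 h1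
        obtain ⟨le2, mem2, pw2⟩ := ih₂ cid did s I O t G B1 L1 i1 B2 Cs2 i2 L2 h2
        refine ⟨le1.trans le2, ?_, ?_⟩
        · intro c hc
          rcases List.mem_append.mp hc with hc | hc
          · exact ⟨(mem1 c hc).1, lt_of_lt_of_le (mem1 c hc).2 le2⟩
          · exact ⟨le1.trans (mem2 c hc).1, (mem2 c hc).2⟩
        · refine List.pairwise_append.mpr ⟨pw1, pw2, ?_⟩
          intro a ha b hb
          exact Nat.ne_of_lt (lt_of_lt_of_le (mem1 a ha).2 (mem2 b hb).1)
  | Or c₁ c₂ ih₁ ih₂ =>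
    intro cid did s I O t G B L i B' Cs i' L' h
    simp only [exec, Option.some.injEq, Prod.mk.injEq] at h
    obtain ⟨_, h1, h2, _⟩ := h
    subst h1; subst h2
    exact ⟨Nat.le_succ i, by simp, by simp⟩
  | If a c₁ c₂ ih₁ ih₂ =>
    intro cid did s I O t G B L i B' Cs i' L' h
    simp only [exec] at h
    cases hG : G a with
    | none => rw [hG] at h; exact absurd h (by simp)
    | some v =>
      rw [hG] at h
      simp only at h
      by_cases hv : v = 0
      · simp only [hv, ne_eq, not_true_eq_false, if_false] at h
        exact ih₂ cid did s I O t G B L i B' Cs i' L' h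
      · simp only [ne_eq, hv, not_false_eq_true, if_true] at h
        exact ih₁ cid did s I O t G B L i B' Cs i' L' h
  | Timebound t₀ t₁ c ih =>
    intro cid did s I O t G B L i B' Cs i' L' h
    simp only [exec] at h
    by_cases ht : t₀ ≤ t ∧ t ≤ t₁
    · rw [if_pos ht] at h; exact ih cid did s I O t G B L i B' Cs i' L' h
    · rw [if_neg ht] at h
      by_cases ht' : t < t₀
      · rw [if_pos ht'] at h
        simp only [Option.some.injEq, Prod.mk.injEq] at h
        obtain ⟨_, h1, h2, _⟩ := h
        subst h1; subst h2
        exact ⟨Nat.le_succ i, by simp, by simp⟩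
      · rw [if_neg ht'] at h; exact absurd h (by simp)

lemma consistent_exec_step (S : State) (c : FindelContract)
    (B' : Balance) (Cs : List FindelContract) (i' : ℕ) (L' : List Transaction)
    (d : Primitive)
    (hexec : exec d c.id c.dscId c.scale c.issuer c.proposedOwner
      S.time S.gateway S.balance S.ledger S.freshId = some (B', Cs, i', L'))
    (hcons : consistent S) (E' : List Event) :
    consistent { S with
      contracts := Cs ++ S.contracts.erase c,
      balance := B', freshId := i', ledger := L', events := E' } := by
  obtain ⟨hpw, hlt⟩ := hcons
  obtain ⟨le1, mem1, pw1⟩ := exec_fresh d c.id c.dscId c.scale c.issuer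
    c.proposedOwner S.time S.gateway S.balance S.ledger S.freshId B' Cs i' L' hexec
  have hsub : List.Sublist (S.contracts.erase c) S.contracts := List.erase_sublist
  constructor
  · refine List.pairwise_append.mpr ⟨pw1, hpw.sublist hsub, ?_⟩
    intro a ha b hb
    have : b.id < S.freshId := hlt b (hsub.mem hb)
    exact Nat.ne_of_gt (lt_of_lt_of_le this (mem1 a ha).1)
  · intro x hx
    rcases List.mem_append.mp hx with hx | hx
    · exact (mem1 x hx).2
    · exact lt_of_lt_of_le (hlt x (hsub.mem hx)) le1

/-- the marketplace step relation preserves state consistency. -/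
theorem step_preserves_consistency
    (r : Rule) (S S' : State) (h : Step r S S') (hcons : consistent S) :
    consistent S' := by
  obtain ⟨hpw, hlt⟩ := hcons
  cases h with
  | issue S dsc I pO s hdsc =>
    constructor
    · refine List.pairwise_cons.mpr ⟨?_, hpw⟩
      intro c hc
      exact Nat.ne_of_gt (hlt c hc)
    · intro c hc
      rcases List.mem_cons.mp hc with hc | hc
      · subst hc; exact Nat.lt_succ_self _
      · exact (hlt c hc).trans (Nat.lt_succ_self _)
  | join S c dsc B' Cs i' L' hc hu hdsc hdid hnotOr htime hexec =>
    exact consistent_exec_step S c B' Cs i' L' c.prim hexec ⟨hpw, hlt⟩ _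
  | joinOr S c dsc c₁ c₂ d B' Cs i' L' hc hu hdsc hdid hOr hch htime hexec =>
    exact consistent_exec_step S c B' Cs i' L' d hexec ⟨hpw, hlt⟩ _
  | fail S c dsc hc hu hdsc hdid hnotOr htime hexec =>
    have hsub : List.Sublist (S.contracts.erase c) S.contracts := List.erase_sublist
    exact ⟨hpw.sublist hsub, fun x hx => hlt x (hsub.mem hx)⟩
  | tick S => exact ⟨hpw, hlt⟩
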